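/- Let D=(V,A) be a finite digraph, r ∈ V, T ⊆ V∖{r} a set of terminals, k and d_b natural numbers, and Y ⊆ V∖(T∪{r}) with |Y| ≤ k. Let T₀ be the set of source terminals, T₁ ⊆ T₀ the set of source terminals having an in-neighbor in Y, B_h the set of vertices of V∖(T∪{r}∪Y) having at least d_b+1 out-neighbors in T₀∖T₁, and W_l the set of vertices of T₀∖T₁ that have no in-neighbor in B_h and are not out-neighbors of r. If |W_l| > d_b·(k−|Y|), then there is no solution S for the instance (D,r,T) with Y ⊆ S and |S| ≤ k. -/
import Mathlib


/-- Reachability by a directed path all of whose vertices lie in `X`,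
    via the reflexive-transitive closure of the arc relation restricted to `X`. -/
def reachIn {V : Type*} (A : V → V → Prop) (X : Set V) (u v : V) : Prop :=
  Relation.ReflTransGen (fun a b => a ∈ X ∧ b ∈ X ∧ A a b) u v

theorem stmt_4 {V : Type*} [Fintype V] (A : V → V → Prop) (r : V) (T : Set V)
    (hT : r ∉ T) (k d_b : ℕ) (Y : Set V) (hY : Y ⊆ (T ∪ {r})ᶜ) (hYk : Y.ncard ≤ k) :
    -- set of source terminals
    let T₀ : Set V := {t ∈ T | ∀ u ∈ T, ¬ A u t}
    -- source terminals having an in-neighbor in Y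
    let T₁ : Set V := {t ∈ T₀ | ∃ y ∈ Y, A y t}
    -- non-terminals outside Y ∪ {r} with at least d_b + 1 out-neighbors in T₀ ∖ T₁
    let Bh : Set V := {v | v ∉ T ∧ v ≠ r ∧ v ∉ Y ∧ d_b + 1 ≤ {t ∈ T₀ \ T₁ | A v t}.ncard}
    -- vertices of T₀ ∖ T₁ with no in-neighbor in Bh that are not out-neighbors of r
    let Wl : Set V := {t ∈ T₀ \ T₁ | (∀ b ∈ Bh, ¬ A b t) ∧ ¬ A r t}
    Wl.ncard > d_b * (k - Y.ncard) →
      ¬ ∃ S : Set V, Y ⊆ S ∧ S ⊆ (T ∪ {r})ᶜ ∧ S.ncard ≤ k ∧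
          ∀ t ∈ T, reachIn A (S ∪ T ∪ {r}) r t := by
  intro T₀ T₁ Bh Wl hWl
  rintro ⟨S, hYS, hSc, hSk, hreach⟩
  classical
  -- every vertex of Wl has an in-neighbor in S \ Y
  have hpred : ∀ t ∈ Wl, ∃ u, u ∈ S \ Y ∧ A u t := by
    intro t ht
    obtain ⟨⟨ht₀, ht₁⟩, hnb, hnr⟩ := ht
    obtain ⟨htT, hsrc⟩ := ht₀
    have hr : reachIn A (S ∪ T ∪ {r}) r t := hreach t htT
    rcases Relation.ReflTransGen.cases_tail hr with h | ⟨u, _, huX, _, hA⟩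
    · exact absurd (h ▸ htT) hT
    · refine ⟨u, ⟨?_, ?_⟩, hA⟩
      · rcases huX with (hu | hu) | hu
        · exact hu
        · exact absurd hA (hsrc u hu)
        · rcases hu with rfl; exact absurd hA hnr
      · intro huY
        exact ht₁ ⟨⟨htT, hsrc⟩, u, huY, hA⟩
  -- choose such an in-neighbor
  let f : V → V := fun t => if h : t ∈ Wl then (hpred t h).choose else t
  have hf : ∀ t ∈ Wl, f t ∈ S \ Y ∧ A (f t) t := by
    intro t ht
    simp only [f, dif_pos ht]
    exact ⟨(hpred t ht).choose_spec.1, (hpred t ht).choose_spec.2⟩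
  have hWlfin : Wl.Finite := Set.toFinite _
  set s : Finset V := hWlfin.toFinset with hs
  have hmem : ∀ t, t ∈ s ↔ t ∈ Wl := fun t => hWlfin.mem_toFinset
  -- each fiber of f has size at most d_b
  have hfiber : ∀ u ∈ s.image f, (s.filter fun x => f x = u).card ≤ d_b := by
    intro u hu
    obtain ⟨t, hts, hft⟩ := Finset.mem_image.mp hu
    have htWl : t ∈ Wl := (hmem t).mp hts
    obtain ⟨⟨hfS, hfY⟩, hfA⟩ := hf t htWl
    have huS : u ∈ S := hft ▸ hfS
    have huY : u ∉ Y := hft ▸ hfY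
    have huc : u ∈ (T ∪ {r})ᶜ := hSc huS
    have huT : u ∉ T := fun h => huc (Or.inl h)
    have hur : u ≠ r := fun h => huc (Or.inr h)
    -- u is not in Bh, since t ∈ Wl has no in-neighbor in Bh
    have huB : u ∉ Bh := fun hB => htWl.2.1 u hB (hft ▸ hfA)
    have hcard : {x ∈ T₀ \ T₁ | A u x}.ncard ≤ d_b := by
      by_contra hc
      exact huB ⟨huT, hur, huY, by omega⟩
    calc (s.filter fun x => f x = u).card
        ≤ {x ∈ T₀ \ T₁ | A u x}.ncard := by
          rw [Set.ncard_eq_toFinset_card' ]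
          apply Finset.card_le_card
          intro x hx
          obtain ⟨hxs, hfx⟩ := Finset.mem_filter.mp hx
          have hxWl : x ∈ Wl := (hmem x).mp hxs
          have := (hf x hxWl).2
          rw [hfx] at this
          simp only [Set.mem_toFinset, Set.mem_setOf_eq]
          exact ⟨hxWl.1, this⟩
      _ ≤ d_b := hcard
  have hmain : s.card ≤ d_b * (s.image f).card :=
    Finset.card_le_mul_card_image s d_b hfiber
  -- the image is contained in S \ Y
  have himg : (s.image f).card ≤ (S \ Y).ncard := by
    rw [Set.ncard_eq_toFinset_card']
    apply Finset.card_le_card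
    intro u hu
    obtain ⟨t, hts, hft⟩ := Finset.mem_image.mp hu
    have := (hf t ((hmem t).mp hts)).1
    rw [hft] at this
    simpa using this
  have hSYcard : (S \ Y).ncard ≤ k - Y.ncard := by
    rw [Set.ncard_diff hYS]
    exact Nat.sub_le_sub_right hSk _
  have hWlcard : Wl.ncard = s.card := Set.ncard_eq_toFinset_card _ hWlfin
  have : Wl.ncard ≤ d_b * (k - Y.ncard) := by
    rw [hWlcard]
    calc s.card ≤ d_b * (s.image f).card := hmain
      _ ≤ d_b * (k - Y.ncard) := Nat.mul_le_mul_left _ (himg.trans hSYcard)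
  omega
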